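/- Let ρ be a d×d density matrix, let n ≥ 1, let p_1, …, p_n ≥ 0 with Σ_j p_j = 1, and let θ_1, …, θ_n ∈ ℝ. On the Hilbert space ℂ^n ⊗ ℂ² ⊗ (ℂ^d)^{⊗n} define W := Σ_{j=1}^n |j⟩⟨j| ⊗ [ (|0⟩⟨0| ⊗ I + |1⟩⟨1| ⊗ (P_j ⊗ I)) · (R_y(θ_j) ⊗ I) ], where R_y(θ) is the 2×2 rotation with first column (cos(θ/2), sin(θ/2)) and second column (−sin(θ/2), cos(θ/2)), and P_j ⊗ I acts as the cyclic permutation on the first j factors of (ℂ^d)^{⊗n} and identity elsewhere. Let ψ := Σ_j √(p_j) |j⟩ and X the Pauli-X matrix. Then tr[ (I_n ⊗ X ⊗ I) · W (|ψ⟩⟨ψ| ⊗ |0⟩⟨0| ⊗ ρ^{⊗n}) W† ] = Σ_{j=1}^n p_j sin(θ_j) tr(ρ^j). -/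

import Mathlib

open Matrix Kronecker
open scoped ComplexOrder

/-- `|0⟩⟨0|` on one qubit. -/
noncomputable def ketbra0 : Matrix (Fin 2) (Fin 2) ℂ := !![1, 0; 0, 0]

/-- `|1⟩⟨1|` on one qubit. -/
noncomputable def ketbra1 : Matrix (Fin 2) (Fin 2) ℂ := !![0, 0; 0, 1]

/-- The Pauli-X matrix. -/
noncomputable def pauliX : Matrix (Fin 2) (Fin 2) ℂ := !![0, 1; 1, 0]

/-- The single-qubit rotation `R_y(θ)` with first column `(cos(θ/2), sin(θ/2))`
and second column `(−sin(θ/2), cos(θ/2))`. -/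
noncomputable def Ry (θ : ℝ) : Matrix (Fin 2) (Fin 2) ℂ :=
  !![(Real.cos (θ / 2) : ℂ), (-(Real.sin (θ / 2)) : ℝ);
     (Real.sin (θ / 2) : ℂ), (Real.cos (θ / 2) : ℂ)]

/-- The n-fold tensor (Kronecker) power `ρ^{⊗n}`, indexed by tuples `Fin n → Fin d`. -/
noncomputable def tensorPow (d n : ℕ) (ρ : Matrix (Fin d) (Fin d) ℂ) :
    Matrix (Fin n → Fin d) (Fin n → Fin d) ℂ :=
  Matrix.of fun x y => ∏ i, ρ (x i) (y i)

/-- The index map underlying the cyclic permutation of the first `j` of `n` tensor factors. -/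
def cycIdx (n j : ℕ) (i : Fin n) : Fin n :=
  if h : (i : ℕ) + 1 < j ∧ (i : ℕ) + 1 < n then ⟨(i : ℕ) + 1, h.2⟩
  else if (i : ℕ) + 1 = j then ⟨0, i.pos⟩
  else i

/-- `P_j ⊗ I`: the cyclic permutation operator on the first `j` tensor factors of
`(ℂ^d)^{⊗n}`, identity on the remaining factors. -/
noncomputable def cycPerm (d n j : ℕ) : Matrix (Fin n → Fin d) (Fin n → Fin d) ℂ :=
  Matrix.of fun y x => if y = (fun i => x (cycIdx n j i)) then 1 else 0

/-- The QSF circuit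
`W = Σ_{j=1}^n |j⟩⟨j| ⊗ [(|0⟩⟨0| ⊗ I + |1⟩⟨1| ⊗ (P_j ⊗ I)) · (R_y(θ_j) ⊗ I)]`
on `ℂ^n ⊗ ℂ² ⊗ (ℂ^d)^{⊗n}` (the index `j : Fin n` encodes the degree `j + 1`). -/
noncomputable def qsfW (d n : ℕ) (θ : Fin n → ℝ) :
    Matrix (Fin n × Fin 2 × (Fin n → Fin d)) (Fin n × Fin 2 × (Fin n → Fin d)) ℂ :=
  ∑ j : Fin n, Matrix.single j j (1 : ℂ) ⊗ₖ
    ((ketbra0 ⊗ₖ (1 : Matrix (Fin n → Fin d) (Fin n → Fin d) ℂ)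
        + ketbra1 ⊗ₖ cycPerm d n ((j : ℕ) + 1)) *
      (Ry (θ j) ⊗ₖ (1 : Matrix (Fin n → Fin d) (Fin n → Fin d) ℂ)))

/-! ### Auxiliary lemmas -/

lemma sum_snoc {d n : ℕ} (f : (Fin (n+1) → Fin d) → ℂ) :
    ∑ x : Fin (n+1) → Fin d, f x
      = ∑ c : Fin d, ∑ y : Fin n → Fin d, f (Fin.snoc y c) := by
  rw [← Equiv.sum_comp (Fin.snocEquiv (fun _ => Fin d)) f, Fintype.sum_prod_type]
  rfl

lemma pathSum (d : ℕ) (A B : Matrix (Fin d) (Fin d) ℂ) (m : ℕ) :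
    ∑ x : Fin (m+1) → Fin d,
        (∏ i : Fin m, A (x i.castSucc) (x i.succ)) * B (x (Fin.last m)) (x 0)
      = (A ^ m * B).trace := by
  induction m generalizing B with
  | zero =>
      rw [pow_zero, one_mul, ← Equiv.sum_comp (Equiv.funUnique (Fin 1) (Fin d)).symm]
      simp [Matrix.trace, Matrix.diag]
  | succ m ih =>
      rw [sum_snoc]
      rw [Finset.sum_comm]
      have key : ∀ y : Fin (m+1) → Fin d, ∀ c : Fin d,
          (∏ i : Fin (m+1), A ((Fin.snoc y c : Fin (m+2) → Fin d) i.castSucc)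
              ((Fin.snoc y c : Fin (m+2) → Fin d) i.succ))
            * B ((Fin.snoc y c : Fin (m+2) → Fin d) (Fin.last (m+1)))
              ((Fin.snoc y c : Fin (m+2) → Fin d) 0)
          = (∏ i : Fin m, A (y i.castSucc) (y i.succ)) *
              (A (y (Fin.last m)) c * B c (y 0)) := by
        intro y c
        rw [Fin.prod_univ_castSucc]
        have h1 : (Fin.last m).succ = Fin.last (m+1) := rfl
        have h2 : ∀ i : Fin m, (i.castSucc).succ = (i.succ).castSucc := fun i => rfl
        have h3 : (0 : Fin (m+2)) = (0 : Fin (m+1)).castSucc := rfl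
        rw [h1, h3]
        simp only [h2, Fin.snoc_castSucc, Fin.snoc_last]
        ring
      simp only [key]
      have key2 : ∀ y : Fin (m+1) → Fin d,
          ∑ c : Fin d, (∏ i : Fin m, A (y i.castSucc) (y i.succ)) *
              (A (y (Fin.last m)) c * B c (y 0))
          = (∏ i : Fin m, A (y i.castSucc) (y i.succ)) * (A * B) (y (Fin.last m)) (y 0) := by
        intro y
        rw [← Finset.mul_sum, Matrix.mul_apply]
      simp only [key2]
      rw [ih (A * B), ← Matrix.mul_assoc, ← pow_succ]

lemma cycIdx_castSucc {n j : ℕ} (hjn : j ≤ n) (i : Fin n) :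
    cycIdx (n+1) j i.castSucc = (cycIdx n j i).castSucc := by
  simp only [cycIdx, Fin.coe_castSucc]
  by_cases h1 : (i:ℕ) + 1 < j
  · rw [dif_pos ⟨h1, by omega⟩, dif_pos ⟨h1, by omega⟩]
    rfl
  · rw [dif_neg (by omega), dif_neg (by omega)]
    by_cases h2 : (i:ℕ) + 1 = j
    · rw [if_pos h2, if_pos h2]
      rfl
    · rw [if_neg h2, if_neg h2]

lemma cycIdx_last {n j : ℕ} (hjn : j ≤ n) : cycIdx (n+1) j (Fin.last n) = Fin.last n := by
  simp only [cycIdx, Fin.val_last]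
  rw [dif_neg (by omega), if_neg (by omega)]

lemma cycIdx_full_castSucc {m : ℕ} (i : Fin m) : cycIdx (m+1) (m+1) i.castSucc = i.succ := by
  simp only [cycIdx, Fin.coe_castSucc]
  rw [dif_pos ⟨by omega, by omega⟩]
  rfl

lemma cycIdx_full_last {m : ℕ} : cycIdx (m+1) (m+1) (Fin.last m) = 0 := by
  simp only [cycIdx, Fin.val_last]
  rw [dif_neg (by omega)]
  simp

lemma cycSum_full (d m : ℕ) (ρ : Matrix (Fin d) (Fin d) ℂ) :
    ∑ x : Fin (m+1) → Fin d, ∏ i, ρ (x i) (x (cycIdx (m+1) (m+1) i))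
      = (ρ ^ (m+1)).trace := by
  have hp := pathSum d ρ ρ m
  rw [← pow_succ] at hp
  rw [← hp]
  apply Finset.sum_congr rfl
  intro x _
  rw [Fin.prod_univ_castSucc]
  congr 1
  · exact Finset.prod_congr rfl fun i _ => by rw [cycIdx_full_castSucc]
  · rw [cycIdx_full_last]

lemma cycSum (d : ℕ) (ρ : Matrix (Fin d) (Fin d) ℂ) (hρ : ρ.trace = 1)
    (j : ℕ) (hj : 1 ≤ j) : ∀ n, j ≤ n →
    ∑ x : Fin n → Fin d, ∏ i, ρ (x i) (x (cycIdx n j i)) = (ρ ^ j).trace := by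
  intro n
  induction n with
  | zero => omega
  | succ n ih =>
    intro hjn
    rcases eq_or_lt_of_le hjn with he | hlt
    · subst he
      exact cycSum_full d n ρ
    · have hjn' : j ≤ n := by omega
      rw [sum_snoc]
      have key : ∀ c : Fin d, ∀ y : Fin n → Fin d,
          (∏ i : Fin (n+1), ρ ((Fin.snoc y c : Fin (n+1) → Fin d) i)
            ((Fin.snoc y c : Fin (n+1) → Fin d) (cycIdx (n+1) j i)))
          = (∏ i : Fin n, ρ (y i) (y (cycIdx n j i))) * ρ c c := by
        intro c y
        rw [Fin.prod_univ_castSucc]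
        congr 1
        · exact Finset.prod_congr rfl fun i _ => by
            rw [cycIdx_castSucc hjn', Fin.snoc_castSucc, Fin.snoc_castSucc]
        · rw [cycIdx_last hjn', Fin.snoc_last]
      simp only [key]
      rw [Finset.sum_comm]
      simp only [← Finset.mul_sum]
      have htr : ∑ c : Fin d, ρ c c = 1 := hρ
      simp only [htr, mul_one]
      exact ih hjn'

lemma trace_cycPerm_mul (d n j : ℕ) (ρ : Matrix (Fin d) (Fin d) ℂ) :
    (cycPerm d n j * tensorPow d n ρ).trace
      = ∑ y : Fin n → Fin d, ∏ i, ρ (y i) (y (cycIdx n j i)) := by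
  rw [Matrix.trace]
  simp only [Matrix.diag_apply, Matrix.mul_apply, cycPerm, tensorPow, Matrix.of_apply,
    ite_mul, one_mul, zero_mul]
  rw [Finset.sum_comm]
  apply Finset.sum_congr rfl
  intro y _
  rw [Finset.sum_ite_eq' Finset.univ (fun i => y (cycIdx n j i))
    (fun x => ∏ i, ρ (y i) (x i))]
  simp

lemma trace_mul_cycPermH (d n j : ℕ) (ρ : Matrix (Fin d) (Fin d) ℂ) :
    (tensorPow d n ρ * (cycPerm d n j)ᴴ).trace
      = ∑ y : Fin n → Fin d, ∏ i, ρᵀ (y i) (y (cycIdx n j i)) := by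
  rw [Matrix.trace]
  simp only [Matrix.diag_apply, Matrix.mul_apply, cycPerm, tensorPow,
    Matrix.conjTranspose_apply, Matrix.of_apply, apply_ite (star : ℂ → ℂ), star_one, star_zero,
    mul_ite, mul_one, mul_zero]
  rw [Finset.sum_comm]
  apply Finset.sum_congr rfl
  intro y _
  rw [Finset.sum_ite_eq' Finset.univ (fun i => y (cycIdx n j i))
    (fun x => ∏ i, ρ (x i) (y i))]
  simp [Matrix.transpose_apply]

lemma kron_conjT {m n : Type*} (A : Matrix m m ℂ) (B : Matrix n n ℂ) :
    (A ⊗ₖ B)ᴴ = Aᴴ ⊗ₖ Bᴴ := by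
  ext ⟨a, b⟩ ⟨c, e⟩
  simp [Matrix.conjTranspose_apply, Matrix.kroneckerMap_apply]

lemma ketbra0_conjT : ketbra0ᴴ = ketbra0 := by
  ext i j; fin_cases i <;> fin_cases j <;> simp [ketbra0]

lemma ketbra1_conjT : ketbra1ᴴ = ketbra1 := by
  ext i j; fin_cases i <;> fin_cases j <;> simp [ketbra1]

lemma stdE_conjT {n : ℕ} (j : Fin n) :
    (Matrix.single j j (1 : ℂ))ᴴ = Matrix.single j j (1 : ℂ) := by
  ext a b
  simp [Matrix.conjTranspose_apply, Matrix.single, apply_ite (star : ℂ → ℂ),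
    and_comm]

lemma RyH (θ : ℝ) : (Ry θ)ᴴ =
    !![(Real.cos (θ / 2) : ℂ), (Real.sin (θ / 2) : ℂ);
       (-(Real.sin (θ / 2)) : ℝ), (Real.cos (θ / 2) : ℂ)] := by
  ext i j; fin_cases i <;> fin_cases j <;>
    simp [Ry, Matrix.conjTranspose_apply, Complex.conj_ofReal, -Complex.ofReal_cos,
      -Complex.ofReal_sin, -Complex.ofReal_neg]

lemma qub00 (θ : ℝ) : (pauliX * ketbra0 * Ry θ * ketbra0 * (Ry θ)ᴴ * ketbra0).trace = 0 := by
  rw [RyH]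
  simp [pauliX, ketbra0, Ry, Matrix.mul_fin_two, Matrix.trace_fin_two]

lemma qub01 (θ : ℝ) : (pauliX * ketbra0 * Ry θ * ketbra0 * (Ry θ)ᴴ * ketbra1).trace
    = (Real.cos (θ / 2) : ℂ) * (Real.sin (θ / 2) : ℂ) := by
  rw [RyH]
  simp [pauliX, ketbra0, ketbra1, Ry, Matrix.mul_fin_two, Matrix.trace_fin_two]

lemma qub10 (θ : ℝ) : (pauliX * ketbra1 * Ry θ * ketbra0 * (Ry θ)ᴴ * ketbra0).trace
    = (Real.cos (θ / 2) : ℂ) * (Real.sin (θ / 2) : ℂ) := by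
  rw [RyH]
  simp [pauliX, ketbra0, ketbra1, Ry, Matrix.mul_fin_two, Matrix.trace_fin_two]
  ring

lemma qub11 (θ : ℝ) : (pauliX * ketbra1 * Ry θ * ketbra0 * (Ry θ)ᴴ * ketbra1).trace = 0 := by
  rw [RyH]
  simp [pauliX, ketbra0, ketbra1, Ry, Matrix.mul_fin_two, Matrix.trace_fin_two]

lemma middle (d n j : ℕ) (θj : ℝ) (ρ : Matrix (Fin d) (Fin d) ℂ)
    (h1 : (cycPerm d n (j+1) * tensorPow d n ρ).trace = (ρ ^ (j+1)).trace)
    (h2 : (tensorPow d n ρ * (cycPerm d n (j+1))ᴴ).trace = (ρ ^ (j+1)).trace) :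
    ((pauliX ⊗ₖ (1 : Matrix (Fin n → Fin d) (Fin n → Fin d) ℂ)) *
      ((((ketbra0 ⊗ₖ (1 : Matrix (Fin n → Fin d) (Fin n → Fin d) ℂ)
            + ketbra1 ⊗ₖ cycPerm d n (j+1)) * (Ry θj ⊗ₖ 1)) *
        (ketbra0 ⊗ₖ tensorPow d n ρ) *
        ((ketbra0 ⊗ₖ (1 : Matrix (Fin n → Fin d) (Fin n → Fin d) ℂ)
            + ketbra1 ⊗ₖ cycPerm d n (j+1)) * (Ry θj ⊗ₖ 1))ᴴ))).trace
      = (Real.sin θj : ℂ) * (ρ ^ (j+1)).trace := by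
  rw [Matrix.conjTranspose_mul, Matrix.conjTranspose_add, kron_conjT, kron_conjT, kron_conjT,
    ketbra0_conjT, ketbra1_conjT, Matrix.conjTranspose_one]
  simp only [Matrix.add_mul, Matrix.mul_add, ← Matrix.mul_assoc, Matrix.trace_add]
  simp only [← Matrix.mul_kronecker_mul, Matrix.one_mul, Matrix.mul_one, Matrix.trace_kronecker]
  rw [qub00, qub01, qub10, qub11, h1, h2]
  have hs : (Real.sin θj : ℂ) = 2 * Real.sin (θj / 2) * Real.cos (θj / 2) := by
    have h : Real.sin θj = 2 * Real.sin (θj / 2) * Real.cos (θj / 2) := by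
      rw [← Real.sin_two_mul]; ring_nf
    rw [h]; push_cast; ring
  rw [hs]; ring

lemma trace_kron_blocks {α β : Type*} [Fintype α] [Fintype β]
    (A₁ B₁ C₁ D₁ : Matrix α α ℂ) (A₂ B₂ C₂ D₂ : Matrix β β ℂ) :
    (A₁ ⊗ₖ A₂ * (B₁ ⊗ₖ B₂ * (C₁ ⊗ₖ C₂) * (D₁ ⊗ₖ D₂))).trace
      = (A₁ * (B₁ * C₁ * D₁)).trace * (A₂ * (B₂ * C₂ * D₂)).trace := by
  rw [← Matrix.mul_kronecker_mul, ← Matrix.mul_kronecker_mul, ← Matrix.mul_kronecker_mul,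
    Matrix.trace_kronecker]

lemma trace_E {n : ℕ} (j k : Fin n) (V : Matrix (Fin n) (Fin n) ℂ) :
    (Matrix.single j j (1:ℂ) * V * Matrix.single k k 1).trace
      = if j = k then V j j else 0 := by
  rw [Matrix.trace]
  simp only [Matrix.diag_apply, Matrix.mul_apply, Matrix.single, Matrix.of_apply,
    ite_mul, mul_ite, one_mul, mul_one, zero_mul, mul_zero, ite_and]
  simp only [Finset.sum_ite_eq, Finset.sum_ite_eq', Finset.mem_univ, if_true]
  by_cases h : j = k
  · subst h; simp
  · simp [h]

theorem stmt12 (d n : ℕ) (hd : 1 ≤ d) (hn : 1 ≤ n)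
    (ρ : Matrix (Fin d) (Fin d) ℂ) (hρ : ρ.PosSemidef) (hρtr : ρ.trace = 1)
    (p : Fin n → ℝ) (hp : ∀ j, 0 ≤ p j) (hpsum : ∑ j, p j = 1)
    (θ : Fin n → ℝ) :
    (((1 : Matrix (Fin n) (Fin n) ℂ) ⊗ₖ
          (pauliX ⊗ₖ (1 : Matrix (Fin n → Fin d) (Fin n → Fin d) ℂ))) *
        (qsfW d n θ *
          (Matrix.vecMulVec (fun j => ((Real.sqrt (p j) : ℝ) : ℂ))
              (star fun j => ((Real.sqrt (p j) : ℝ) : ℂ)) ⊗ₖ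
            (ketbra0 ⊗ₖ tensorPow d n ρ)) *
          (qsfW d n θ)ᴴ)).trace
      = ∑ j : Fin n, ((p j * Real.sin (θ j) : ℝ) : ℂ) * (ρ ^ ((j : ℕ) + 1)).trace := by
  classical
  set v : Fin n → ℂ := fun j => ((Real.sqrt (p j) : ℝ) : ℂ) with hv
  set V := Matrix.vecMulVec v (star v) with hV
  set M : Fin n → Matrix (Fin 2 × (Fin n → Fin d)) (Fin 2 × (Fin n → Fin d)) ℂ :=
    fun j => (ketbra0 ⊗ₖ (1 : Matrix (Fin n → Fin d) (Fin n → Fin d) ℂ)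
        + ketbra1 ⊗ₖ cycPerm d n ((j : ℕ) + 1)) *
      (Ry (θ j) ⊗ₖ (1 : Matrix (Fin n → Fin d) (Fin n → Fin d) ℂ)) with hM
  have hW : qsfW d n θ = ∑ j : Fin n, Matrix.single j j (1 : ℂ) ⊗ₖ M j := rfl
  have hWH : (qsfW d n θ)ᴴ
      = ∑ k : Fin n, Matrix.single k k (1 : ℂ) ⊗ₖ (M k)ᴴ := by
    rw [hW, Matrix.conjTranspose_sum]
    exact Finset.sum_congr rfl fun k _ => by rw [kron_conjT, stdE_conjT]
  rw [hWH, hW]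
  rw [Finset.sum_mul, Finset.sum_mul]
  simp only [Finset.mul_sum, Matrix.trace_sum, Finset.sum_mul]
  have hterm : ∀ j k : Fin n,
      (((1 : Matrix (Fin n) (Fin n) ℂ) ⊗ₖ
          (pauliX ⊗ₖ (1 : Matrix (Fin n → Fin d) (Fin n → Fin d) ℂ))) *
        (Matrix.single j j (1 : ℂ) ⊗ₖ M j * (V ⊗ₖ (ketbra0 ⊗ₖ tensorPow d n ρ)) *
          (Matrix.single k k (1 : ℂ) ⊗ₖ (M k)ᴴ))).trace
      = (if j = k then V j j else 0) *
          ((pauliX ⊗ₖ (1 : Matrix (Fin n → Fin d) (Fin n → Fin d) ℂ)) *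
            (M j * (ketbra0 ⊗ₖ tensorPow d n ρ) * (M k)ᴴ)).trace := by
    intro j k
    rw [trace_kron_blocks, Matrix.one_mul, trace_E]
  simp only [hterm, ite_mul, zero_mul]
  simp only [Finset.sum_ite_eq, Finset.mem_univ, if_true]
  apply Finset.sum_congr rfl
  intro j _
  have hjn : (j : ℕ) + 1 ≤ n := j.isLt
  have h1 : (cycPerm d n ((j:ℕ)+1) * tensorPow d n ρ).trace = (ρ ^ ((j:ℕ)+1)).trace := by
    rw [trace_cycPerm_mul]
    exact cycSum d ρ hρtr ((j:ℕ)+1) (by omega) n hjn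
  have h2 : (tensorPow d n ρ * (cycPerm d n ((j:ℕ)+1))ᴴ).trace = (ρ ^ ((j:ℕ)+1)).trace := by
    rw [trace_mul_cycPermH]
    have ht : ρᵀ.trace = 1 := by rw [Matrix.trace_transpose, hρtr]
    rw [cycSum d ρᵀ ht ((j:ℕ)+1) (by omega) n hjn, ← Matrix.transpose_pow,
      Matrix.trace_transpose]
  have hmid := middle d n (j : ℕ) (θ j) ρ h1 h2
  have hMj : M j = (ketbra0 ⊗ₖ (1 : Matrix (Fin n → Fin d) (Fin n → Fin d) ℂ)
        + ketbra1 ⊗ₖ cycPerm d n ((j : ℕ) + 1)) *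
      (Ry (θ j) ⊗ₖ (1 : Matrix (Fin n → Fin d) (Fin n → Fin d) ℂ)) := rfl
  rw [hMj, hmid]
  have hVjj : V j j = (p j : ℂ) := by
    simp only [hV, hv, Matrix.vecMulVec_apply, Pi.star_apply, RCLike.star_def,
      Complex.conj_ofReal]
    rw [← Complex.ofReal_mul, Real.mul_self_sqrt (hp j)]
  rw [hVjj]
  push_cast
  ring
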